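/- Let a, n ≥ 1, let Q_1, …, Q_a be sets of strings, and let Q = Q_1 ∪ … ∪ Q_a. If there is a 2^a·n-good tree from a string α for Q, then for some i with 1 ≤ i ≤ a there is an n-good tree from α for Q_i. -/
import Mathlib


/-- A *tree*: a finite set of pairwise incomparable strings (antichain under
the prefix/extension order), where a string is a finite sequence of naturals. -/
def IsTree (T : Finset (List ℕ)) : Prop :=
  ∀ σ ∈ T, ∀ τ ∈ T, σ <+: τ → σ = τ

/-- `T` is `a`-good from `σ`: `T` is nonempty, every string in `T` extends `σ`,
and for every `τ` with `σ ⊆ τ ⊊ ρ` for some `ρ ∈ T`, at least `a` immediate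
successors `τ*k` of `τ` are initial segments of elements of `T`. -/
def GoodFrom (a : ℕ) (T : Finset (List ℕ)) (σ : List ℕ) : Prop :=
  T.Nonempty ∧ (∀ ρ ∈ T, σ <+: ρ) ∧
    ∀ τ : List ℕ, (∃ ρ ∈ T, σ <+: τ ∧ τ <+: ρ ∧ τ ≠ ρ) →
      a ≤ {k : ℕ | ∃ ρ ∈ T, τ ++ [k] <+: ρ}.ncard

/-- `T` is `a`-good from `σ` for `P`: in addition `T ⊆ P`. -/
def GoodFromFor (a : ℕ) (T : Finset (List ℕ)) (σ : List ℕ) (P : Set (List ℕ)) : Prop :=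
  GoodFrom a T σ ∧ ↑T ⊆ P


lemma succ_eq {τ ρ : List ℕ} {k j : ℕ} (h : τ ++ [k] <+: ρ) (h' : τ ++ [j] <+: ρ) : k = j := by
  rcases List.prefix_or_prefix_of_prefix h h' with h2 | h2
  · have := h2.eq_of_length (by simp); simpa using this
  · have := h2.eq_of_length (by simp); simpa using this.symm

lemma prefix_succ_of_ne {τ ρ : List ℕ} (h : τ <+: ρ) (hne : τ ≠ ρ) : ∃ k, τ ++ [k] <+: ρ := by
  obtain ⟨t, rfl⟩ := h
  cases t with
  | nil => simp at hne
  | cons k t' => exact ⟨k, ⟨t', by simp⟩⟩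

lemma succSet_finite (S : Finset (List ℕ)) (τ : List ℕ) :
    {k : ℕ | ∃ ρ ∈ S, τ ++ [k] <+: ρ}.Finite := by
  have : {k : ℕ | ∃ ρ ∈ S, τ ++ [k] <+: ρ} ⊆ ⋃ ρ ∈ S, {k | τ ++ [k] <+: ρ} := by
    intro k ⟨ρ, hρ, hp⟩
    exact Set.mem_biUnion hρ hp
  refine Set.Finite.subset (Set.Finite.biUnion S.finite_toSet fun ρ _ => ?_) this
  exact Set.Subsingleton.finite fun k hk j hj => succ_eq hk hj

lemma goodFrom_mono {a b : ℕ} {T : Finset (List ℕ)} {σ : List ℕ} (hab : a ≤ b)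
    (h : GoodFrom b T σ) : GoodFrom a T σ :=
  ⟨h.1, h.2.1, fun τ hτ => le_trans hab (h.2.2 τ hτ)⟩

lemma singleton_good (m : ℕ) (τ : List ℕ) : GoodFrom m {τ} τ := by
  refine ⟨⟨τ, by simp⟩, by simp, fun τ' ⟨ρ, hρ, h1, h2, h3⟩ => ?_⟩
  simp only [Finset.mem_singleton] at hρ; subst hρ
  exact (h3 (h2.eq_of_length (le_antisymm h2.length_le h1.length_le))).elim

lemma combine (m : ℕ) (hm : 1 ≤ m) (P : Set (List ℕ)) (τ : List ℕ) (K : Set ℕ)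
    (hK : K.Finite) (hcard : m ≤ K.ncard)
    (hgood : ∀ k ∈ K, ∃ S : Finset (List ℕ), ↑S ⊆ P ∧ GoodFrom m S (τ ++ [k])) :
    ∃ S : Finset (List ℕ), ↑S ⊆ P ∧ GoodFrom m S τ := by
  have hgood' : ∀ k : ℕ, ∃ S : Finset (List ℕ),
      k ∈ K → ↑S ⊆ P ∧ GoodFrom m S (τ ++ [k]) := by
    intro k
    by_cases h : k ∈ K
    · exact (hgood k h).imp fun S hS _ => hS
    · exact ⟨∅, fun h' => absurd h' h⟩
  choose f hf using hgood'
  refine ⟨hK.toFinset.biUnion f, ?_, ?_, ?_, ?_⟩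
  · intro ρ hρ
    simp only [Finset.coe_biUnion, Set.mem_iUnion, Finset.mem_coe,
      Set.Finite.mem_toFinset] at hρ
    obtain ⟨k, hk, hρ⟩ := hρ
    exact (hf k hk).1 hρ
  · obtain ⟨k, hk⟩ := Set.nonempty_of_ncard_ne_zero (by omega : K.ncard ≠ 0)
    obtain ⟨ρ, hρ⟩ := (hf k hk).2.1
    exact ⟨ρ, Finset.mem_biUnion.2 ⟨k, hK.mem_toFinset.2 hk, hρ⟩⟩
  · intro ρ hρ
    obtain ⟨k, hk, hρ⟩ := Finset.mem_biUnion.1 hρ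
    exact (List.prefix_append τ [k]).trans ((hf k (hK.mem_toFinset.1 hk)).2.2.1 ρ hρ)
  · rintro τ' ⟨ρ, hρS, hττ', hτ'ρ, hne⟩
    obtain ⟨k0, hk0, hρk0⟩ := Finset.mem_biUnion.1 hρS
    have hk0K := hK.mem_toFinset.1 hk0
    by_cases hττ : τ' = τ
    · subst hττ
      have hsub : K ⊆ {j : ℕ | ∃ ρ ∈ hK.toFinset.biUnion f, τ' ++ [j] <+: ρ} := by
        intro j hj
        obtain ⟨ρ', hρ'⟩ := (hf j hj).2.1
        exact ⟨ρ', Finset.mem_biUnion.2 ⟨j, hK.mem_toFinset.2 hj, hρ'⟩,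
          (hf j hj).2.2.1 ρ' hρ'⟩
      exact le_trans hcard (Set.ncard_le_ncard hsub (succSet_finite _ _))
    · obtain ⟨j, hj⟩ := prefix_succ_of_ne hττ' (Ne.symm hττ)
      -- ρ ∈ f k0, ρ extends τ', τ' extends τ++[j]; also ρ extends τ++[k0], so j = k0
      have hρj : τ ++ [j] <+: ρ := hj.trans hτ'ρ
      have hjk : j = k0 := succ_eq hρj ((hf k0 hk0K).2.2.1 ρ hρk0)
      subst hjk
      have := (hf j hk0K).2.2.2 τ' ⟨ρ, hρk0, hj, hτ'ρ, hne⟩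
      refine le_trans this (Set.ncard_le_ncard ?_ (succSet_finite _ _))
      rintro i ⟨ρ', hρ', hi⟩
      exact ⟨ρ', Finset.mem_biUnion.2 ⟨j, hk0, hρ'⟩, hi⟩

lemma key (m : ℕ) (hm : 1 ≤ m) (A B : Set (List ℕ)) (α : List ℕ) (T : Finset (List ℕ))
    (hsub : ↑T ⊆ A ∪ B)
    (hbranch : ∀ τ : List ℕ, (∃ ρ ∈ T, α <+: τ ∧ τ <+: ρ ∧ τ ≠ ρ) →
      2 * m ≤ {k : ℕ | ∃ ρ ∈ T, τ ++ [k] <+: ρ}.ncard) :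
    ∀ d : ℕ, ∀ τ : List ℕ, α <+: τ → (∃ ρ ∈ T, τ <+: ρ) →
      (∀ ρ ∈ T, τ <+: ρ → ρ.length ≤ τ.length + d) →
      (∃ S : Finset (List ℕ), ↑S ⊆ ↑T ∩ A ∧ GoodFrom m S τ) ∨
      (∃ S : Finset (List ℕ), ↑S ⊆ ↑T ∩ B ∧ GoodFrom m S τ) := by
  have base : ∀ τ ∈ T,
      (∃ S : Finset (List ℕ), ↑S ⊆ ↑T ∩ A ∧ GoodFrom m S τ) ∨
      (∃ S : Finset (List ℕ), ↑S ⊆ ↑T ∩ B ∧ GoodFrom m S τ) := by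
    intro τ hτ
    rcases hsub hτ with h | h
    · exact Or.inl ⟨{τ}, by simp [Set.subset_def, hτ, h], singleton_good m τ⟩
    · exact Or.inr ⟨{τ}, by simp [Set.subset_def, hτ, h], singleton_good m τ⟩
  intro d
  induction d with
  | zero =>
    intro τ hα ⟨ρ, hρ, hτρ⟩ hlen
    have : τ = ρ := hτρ.eq_of_length (le_antisymm hτρ.length_le (by simpa using hlen ρ hρ hτρ))
    exact base τ (this ▸ hρ)
  | succ d ih =>
    intro τ hα hex hlen
    by_cases hτT : τ ∈ T
    · exact base τ hτT
    obtain ⟨ρ0, hρ0, hτρ0⟩ := hex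
    have hne : τ ≠ ρ0 := fun h => hτT (h ▸ hρ0)
    have h2m := hbranch τ ⟨ρ0, hρ0, hα, hτρ0, hne⟩
    set K := {k : ℕ | ∃ ρ ∈ T, τ ++ [k] <+: ρ} with hKdef
    have hKfin : K.Finite := succSet_finite T τ
    set KA := {k ∈ K | ∃ S : Finset (List ℕ), ↑S ⊆ ↑T ∩ A ∧ GoodFrom m S (τ ++ [k])}
      with hKAdef
    set KB := {k ∈ K | ∃ S : Finset (List ℕ), ↑S ⊆ ↑T ∩ B ∧ GoodFrom m S (τ ++ [k])}
      with hKBdef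
    have hcover : K ⊆ KA ∪ KB := by
      intro k hk
      obtain ⟨ρ, hρ, hp⟩ := hk
      have hα' : α <+: τ ++ [k] := hα.trans (List.prefix_append τ [k])
      have hlen' : ∀ ρ' ∈ T, τ ++ [k] <+: ρ' → ρ'.length ≤ (τ ++ [k]).length + d := by
        intro ρ' h1 h2
        have := hlen ρ' h1 ((List.prefix_append τ [k]).trans h2)
        simp only [List.length_append, List.length_cons, List.length_nil]
        omega
      rcases ih (τ ++ [k]) hα' ⟨ρ, hρ, hp⟩ hlen' with h | h
      · exact Or.inl ⟨⟨ρ, hρ, hp⟩, h⟩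
      · exact Or.inr ⟨⟨ρ, hρ, hp⟩, h⟩
    have hKAfin : KA.Finite := hKfin.subset (fun k hk => hk.1)
    have hKBfin : KB.Finite := hKfin.subset (fun k hk => hk.1)
    have hsum : 2 * m ≤ KA.ncard + KB.ncard := by
      refine le_trans h2m (le_trans (Set.ncard_le_ncard hcover (hKAfin.union hKBfin)) ?_)
      exact Set.ncard_union_le _ _
    rcases le_or_gt m KA.ncard with hcase | hcase
    · exact Or.inl (combine m hm (↑T ∩ A) τ KA hKAfin hcase (fun k hk => hk.2))
    · have : m ≤ KB.ncard := by omega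
      exact Or.inr (combine m hm (↑T ∩ B) τ KB hKBfin this (fun k hk => hk.2))

lemma two_color (m : ℕ) (hm : 1 ≤ m) (A B : Set (List ℕ)) (α : List ℕ)
    (T : Finset (List ℕ)) (hgood : GoodFromFor (2 * m) T α (A ∪ B)) :
    (∃ S : Finset (List ℕ), ↑S ⊆ ↑T ∩ A ∧ GoodFrom m S α) ∨
    (∃ S : Finset (List ℕ), ↑S ⊆ ↑T ∩ B ∧ GoodFrom m S α) := by
  obtain ⟨⟨hne, hext, hbr⟩, hsub⟩ := hgood
  refine key m hm A B α T hsub hbr (T.sup (·.length)) α List.prefix_rfl ?_ ?_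
  · obtain ⟨ρ, hρ⟩ := hne
    exact ⟨ρ, hρ, hext ρ hρ⟩
  · intro ρ hρ _
    exact le_trans (Finset.le_sup (f := (·.length)) hρ) (by omega)

lemma isTree_of_subset {T S : Finset (List ℕ)} (hT : IsTree T) (h : (S : Set (List ℕ)) ⊆ ↑T) :
    IsTree S := fun σ hσ τ hτ hp => hT σ (h hσ) τ (h hτ) hp

lemma main : ∀ a : ℕ, ∀ m : ℕ, 1 ≤ m → ∀ (Q : Fin (a + 1) → Set (List ℕ)) (α : List ℕ)
    (T : Finset (List ℕ)), IsTree T → GoodFromFor (2 ^ (a + 1) * m) T α (⋃ i, Q i) →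
    ∃ i, ∃ S : Finset (List ℕ), IsTree S ∧ GoodFromFor m S α (Q i) := by
  intro a
  induction a with
  | zero =>
    intro m hm Q α T hT hgood
    refine ⟨0, T, hT, goodFrom_mono (by omega) hgood.1, ?_⟩
    intro x hx
    obtain ⟨i, hi⟩ := Set.mem_iUnion.1 (hgood.2 hx)
    exact Fin.fin_one_eq_zero i ▸ hi
  | succ a ih =>
    intro m hm Q α T hT hgood
    have hunion : (⋃ i, Q i) = (⋃ i : Fin (a + 1), Q i.castSucc) ∪ Q (Fin.last (a + 1)) := by
      ext x
      simp only [Set.mem_iUnion, Set.mem_union]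
      constructor
      · rintro ⟨i, hi⟩
        rcases Fin.eq_castSucc_or_eq_last i with ⟨j, rfl⟩ | rfl
        · exact Or.inl ⟨j, hi⟩
        · exact Or.inr hi
      · rintro (⟨j, hj⟩ | h)
        · exact ⟨j.castSucc, hj⟩
        · exact ⟨Fin.last _, h⟩
    rw [hunion] at hgood
    have hmul : 2 ^ (a + 1 + 1) * m = 2 * (2 ^ (a + 1) * m) := by ring
    rw [hmul] at hgood
    have hm' : 1 ≤ 2 ^ (a + 1) * m := Nat.one_le_iff_ne_zero.2 (by positivity)
    rcases two_color (2 ^ (a + 1) * m) hm' _ _ α T hgood with ⟨S, hS, hgS⟩ | ⟨S, hS, hgS⟩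
    · have hT' : IsTree S := isTree_of_subset hT (fun x hx => (hS hx).1)
      obtain ⟨i, S', h1, h2'⟩ := ih m hm (fun i => Q i.castSucc) α S hT'
        ⟨hgS, fun x hx => (hS hx).2⟩
      exact ⟨i.castSucc, S', h1, h2'⟩
    · refine ⟨Fin.last _, S, isTree_of_subset hT (fun x hx => (hS hx).1), ?_, fun x hx => (hS hx).2⟩
      exact goodFrom_mono (Nat.le_mul_of_pos_left m (by positivity)) hgS

/-- If there is a `2^a·n`-good tree from `α` for `Q = Q_1 ∪ ⋯ ∪ Q_a`, then for some
`i` there is an `n`-good tree from `α` for `Q_i`. -/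
theorem good_tree_of_union (a n : ℕ) (ha : 1 ≤ a) (hn : 1 ≤ n)
    (Q : Fin a → Set (List ℕ)) (α : List ℕ)
    (T : Finset (List ℕ)) (hT : IsTree T)
    (hgood : GoodFromFor (2 ^ a * n) T α (⋃ i, Q i)) :
    ∃ i : Fin a, ∃ S : Finset (List ℕ), IsTree S ∧ GoodFromFor n S α (Q i) := by
  cases a with
  | zero => omega
  | succ a' => exact main a' n hn Q α T hT hgood
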